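/- For all integers s, r ≥ 1 with r·s ≥ 3, the graph Q_{s,r} is a minor of the ((s+1)×(r·s))-cylindrical grid ring blowup. -/

import Mathlib

/-- `H` is a minor of `G`: there is a family of pairwise disjoint branch sets in `G`,
each inducing a connected subgraph, such that every edge of `H` is realized between
the corresponding branch sets. -/
def IsMinorOf {V W : Type*} (H : SimpleGraph V) (G : SimpleGraph W) : Prop :=
  ∃ X : V → Set W,
    (∀ v : V, (G.induce (X v)).Connected) ∧
    (∀ u v : V, u ≠ v → Disjoint (X u) (X v)) ∧
    (∀ u v : V, H.Adj u v → ∃ a ∈ X u, ∃ b ∈ X v, G.Adj a b)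

/-- The `(t × s)`-cylindrical grid: `t` concentric cycles of length `s`,
with vertical edges between consecutive cycles. -/
def cylGrid (t s : ℕ) : SimpleGraph (Fin t × ZMod s) :=
  SimpleGraph.fromRel fun p q =>
    (p.1 = q.1 ∧ q.2 = p.2 + 1) ∨ (p.2 = q.2 ∧ (q.1 : ℕ) = (p.1 : ℕ) + 1)

/-- The ring blowup of `(G, Q)`: for each `u ∈ Q` add a new vertex `v_u` adjacent to `u`,
to all neighbors of `u`, and to `v_w` for every neighbor `w ∈ Q` of `u`. -/
def ringBlowup {V : Type*} (G : SimpleGraph V) (Q : Set V) : SimpleGraph (V ⊕ ↥Q) :=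
  SimpleGraph.fromRel fun x y =>
    match x, y with
    | Sum.inl a, Sum.inl b => G.Adj a b
    | Sum.inl a, Sum.inr u => a = (u : V) ∨ G.Adj a (u : V)
    | Sum.inr u, Sum.inr w => G.Adj (u : V) (w : V)
    | _, _ => False

/-- The `(t × s)`-cylindrical grid ring blowup: the ring blowup of the
`(t × s)`-cylindrical grid at the vertex set of its outermost cycle. -/
def cylGridRingBlowup (t s : ℕ) : SimpleGraph ((Fin t × ZMod s) ⊕ ↥{p : Fin t × ZMod s | (p.1 : ℕ) = t - 1}) :=
  ringBlowup (cylGrid t s) {p : Fin t × ZMod s | (p.1 : ℕ) = t - 1}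

/-- The graph `Q_{s,r}`: the `(s × (s·r))`-grid together with `2r` terminal vertices
`t_i, t_i'` (encoded as `(i, 0)` and `(i, 1)`), where for each `i` both `t_i` and `t_i'`
are joined to the `i`-th block of `s` consecutive vertices of the first row. -/
def Qgraph (s r : ℕ) : SimpleGraph ((Fin s × Fin (s * r)) ⊕ (Fin r × Fin 2)) :=
  SimpleGraph.fromRel fun x y =>
    match x, y with
    | Sum.inl a, Sum.inl b =>
        (a.1 = b.1 ∧ (b.2 : ℕ) = (a.2 : ℕ) + 1) ∨ (a.2 = b.2 ∧ (b.1 : ℕ) = (a.1 : ℕ) + 1)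
    | Sum.inr u, Sum.inl a =>
        (a.1 : ℕ) = 0 ∧ (u.1 : ℕ) * s ≤ (a.2 : ℕ) ∧ (a.2 : ℕ) < (u.1 : ℕ) * s + s
    | _, _ => False


lemma castInj {m : ℕ} (hm : 0 < m) {j k : ℕ} (hj : j < m) (hk : k < m)
    (h : (j : ZMod m) = (k : ZMod m)) : j = k := by
  haveI : NeZero m := ⟨hm.ne'⟩
  have := congrArg ZMod.val h
  rwa [ZMod.val_cast_of_lt hj, ZMod.val_cast_of_lt hk] at this

lemma induce_singleton_connected {W : Type*} (G : SimpleGraph W) (x : W) :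
    (G.induce {x}).Connected := by
  rw [SimpleGraph.connected_iff]
  refine ⟨?_, ⟨⟨x, rfl⟩⟩⟩
  rintro ⟨a, rfl⟩ ⟨b, (rfl : b = a)⟩
  rfl

lemma induce_chain_connected {W : Type*} (G : SimpleGraph W) (n : ℕ) (hn : 0 < n) (f : ℕ → W)
    (hadj : ∀ k, k + 1 < n → G.Adj (f k) (f (k+1))) :
    (G.induce (f '' Set.Iio n)).Connected := by
  rw [SimpleGraph.connected_iff]
  have h0 : f 0 ∈ f '' Set.Iio n := ⟨0, hn, rfl⟩
  refine ⟨?_, ⟨⟨f 0, h0⟩⟩⟩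
  have key : ∀ m (hm : m < n), (G.induce (f '' Set.Iio n)).Reachable ⟨f 0, h0⟩
      ⟨f m, ⟨m, hm, rfl⟩⟩ := by
    intro m
    induction m with
    | zero => intro _; exact SimpleGraph.Reachable.refl _
    | succ m ih =>
      intro hm
      exact (ih (by omega)).trans (SimpleGraph.Adj.reachable (hadj m hm))
  rintro ⟨_, ja, hja, rfl⟩ ⟨_, jb, hjb, rfl⟩
  simp only [Set.mem_Iio] at hja hjb
  exact (key ja hja).symm.trans (key jb hjb)

lemma block_lt {s r a k : ℕ} (ha : a < r) (hk : k < s) : a * s + k < r * s := by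
  have h2 : (a+1) * s ≤ r * s := Nat.mul_le_mul_right s ha
  rw [Nat.succ_mul] at h2
  omega

lemma block_ne {s : ℕ} {a b k k' : ℕ} (hk : k < s) (hk' : k' < s) (hab : a ≠ b) :
    a * s + k ≠ b * s + k' := by
  rcases hab.lt_or_gt with h | h
  · have h2 : (a+1) * s ≤ b * s := Nat.mul_le_mul_right s h
    rw [Nat.succ_mul] at h2; omega
  · have h2 : (b+1) * s ≤ a * s := Nat.mul_le_mul_right s h
    rw [Nat.succ_mul] at h2; omega

lemma cylGrid_adj_horiz {t m : ℕ} (hm : 0 < m) (i : Fin t) {j : ℕ} (hj : j + 1 < m) :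
    (cylGrid t m).Adj (i, (j : ZMod m)) (i, ((j+1 : ℕ) : ZMod m)) := by
  rw [cylGrid, SimpleGraph.fromRel_adj]
  constructor
  · intro h
    have h2 : (j : ZMod m) = ((j+1 : ℕ) : ZMod m) := congrArg Prod.snd h
    have := castInj hm (by omega) hj h2
    omega
  · exact Or.inl (Or.inl ⟨rfl, by push_cast; ring⟩)

lemma cylGrid_adj_vert {t m : ℕ} {i i' : Fin t} (h : (i' : ℕ) = (i : ℕ) + 1) (c : ZMod m) :
    (cylGrid t m).Adj (i, c) (i', c) := by
  rw [cylGrid, SimpleGraph.fromRel_adj]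
  refine ⟨?_, Or.inl (Or.inr ⟨rfl, h⟩)⟩
  intro he
  have := congrArg (fun p => ((p.1 : ℕ) : ℤ)) he
  simp at this
  omega

lemma ringBlowup_adj_inl {V : Type*} {G : SimpleGraph V} {Q : Set V} {a b : V}
    (h : G.Adj a b) : (ringBlowup G Q).Adj (Sum.inl a) (Sum.inl b) := by
  rw [ringBlowup, SimpleGraph.fromRel_adj]
  exact ⟨by simp [h.ne], Or.inl h⟩

lemma ringBlowup_adj_inlr {V : Type*} {G : SimpleGraph V} {Q : Set V} {a : V} {u : Q}
    (h : G.Adj a (u : V)) : (ringBlowup G Q).Adj (Sum.inl a) (Sum.inr u) := by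
  rw [ringBlowup, SimpleGraph.fromRel_adj]
  exact ⟨by simp, Or.inl (Or.inr h)⟩

lemma ringBlowup_adj_inr {V : Type*} {G : SimpleGraph V} {Q : Set V} {u w : Q}
    (h : G.Adj (u : V) (w : V)) : (ringBlowup G Q).Adj (Sum.inr u) (Sum.inr w) := by
  rw [ringBlowup, SimpleGraph.fromRel_adj]
  refine ⟨?_, Or.inl h⟩
  intro he
  exact h.ne (congrArg Subtype.val (Sum.inr.inj he))
/-- Branch sets for the minor embedding. -/
def Xbr (s r : ℕ) : (Fin s × Fin (s * r)) ⊕ (Fin r × Fin 2) →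
    Set ((Fin (s+1) × ZMod (r*s)) ⊕ ↥{p : Fin (s+1) × ZMod (r*s) | (p.1 : ℕ) = (s+1) - 1})
  | Sum.inl a => {Sum.inl (⟨s - 1 - (a.1 : ℕ), by omega⟩, ((a.2 : ℕ) : ZMod (r*s)))}
  | Sum.inr u =>
      if (u.2 : ℕ) = 0 then
        (fun k => Sum.inl ((⟨s, by omega⟩ : Fin (s+1)),
          (((u.1 : ℕ) * s + k : ℕ) : ZMod (r*s)))) '' Set.Iio s
      else
        (fun k => Sum.inr ⟨((⟨s, by omega⟩ : Fin (s+1)),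
          (((u.1 : ℕ) * s + k : ℕ) : ZMod (r*s))), rfl⟩) '' Set.Iio s

/-- For all `s, r ≥ 1` with `r·s ≥ 3`, the graph `Q_{s,r}` is a minor of the
`((s+1) × (r·s))`-cylindrical grid ring blowup. -/
theorem Qgraph_isMinor_cylGridRingBlowup (s r : ℕ) (hs : 1 ≤ s) (hr : 1 ≤ r)
    (hrs : 3 ≤ r * s) :
    IsMinorOf (Qgraph s r) (cylGridRingBlowup (s + 1) (r * s)) := by
  have hmpos : 0 < r * s := by omega
  have hsr : s * r = r * s := Nat.mul_comm s r
  refine ⟨Xbr s r, ?_, ?_, ?_⟩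
  · -- connectivity
    rintro (a | ⟨i, b⟩)
    · exact induce_singleton_connected _ _
    · simp only [Xbr]
      by_cases hb : (b : ℕ) = 0
      · rw [if_pos hb]
        refine induce_chain_connected _ s (by omega) _ (fun k hk => ?_)
        exact ringBlowup_adj_inl (cylGrid_adj_horiz (j := (i:ℕ)*s + k) hmpos _ (block_lt i.isLt hk))
      · rw [if_neg hb]
        refine induce_chain_connected _ s (by omega) _ (fun k hk => ?_)
        exact ringBlowup_adj_inr (cylGrid_adj_horiz (j := (i:ℕ)*s + k) hmpos _ (block_lt i.isLt hk))
  · -- disjointness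
    have dec : ∀ u v x, x ∈ Xbr s r u → x ∈ Xbr s r v → u = v := by
      rintro (a | ⟨i, b⟩) (a' | ⟨i', b'⟩) x hu hv
      · simp only [Xbr, Set.mem_singleton_iff] at hu hv
        have h := hu.symm.trans hv
        simp only [Sum.inl.injEq, Prod.mk.injEq, Fin.mk.injEq] at h
        have ha1 := a.1.isLt
        have hb1 := a'.1.isLt
        have h1 : (a.1 : ℕ) = (a'.1 : ℕ) := by omega
        have hlt : (a.2 : ℕ) < r * s := by rw [← hsr]; exact a.2.isLt
        have hlt' : (a'.2 : ℕ) < r * s := by rw [← hsr]; exact a'.2.isLt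
        have h2 := castInj hmpos hlt hlt' h.2
        exact congrArg Sum.inl (Prod.ext_iff.mpr ⟨Fin.ext h1, Fin.ext h2⟩)
      · simp only [Xbr, Set.mem_singleton_iff] at hu hv
        split_ifs at hv with hb
        · obtain ⟨k, hk, he⟩ := hv
          have h := hu.symm.trans he.symm
          simp only [Sum.inl.injEq, Prod.mk.injEq, Fin.mk.injEq] at h
          exact absurd h.1 (by omega)
        · obtain ⟨k, hk, he⟩ := hv
          exact absurd (hu.symm.trans he.symm) (by simp)
      · simp only [Xbr, Set.mem_singleton_iff] at hu hv
        split_ifs at hu with hb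
        · obtain ⟨k, hk, he⟩ := hu
          have h := he.trans hv
          simp only [Sum.inl.injEq, Prod.mk.injEq, Fin.mk.injEq] at h
          exact absurd h.1 (by omega)
        · obtain ⟨k, hk, he⟩ := hu
          exact absurd (he.trans hv) (by simp)
      · simp only [Xbr] at hu hv
        split_ifs at hu hv with hb hb'
        · obtain ⟨k, hk, he⟩ := hu
          obtain ⟨k', hk', he'⟩ := hv
          have h := he.trans he'.symm
          simp only [Sum.inl.injEq, Prod.mk.injEq] at h
          have h2 := castInj hmpos (block_lt i.isLt hk) (block_lt i'.isLt hk') h.2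
          have hii : (i : ℕ) = (i' : ℕ) := by
            by_contra hne
            exact block_ne hk hk' hne h2
          have hbb : (b : ℕ) = (b' : ℕ) := by omega
          exact congrArg Sum.inr (Prod.ext_iff.mpr ⟨Fin.ext hii, Fin.ext hbb⟩)
        · obtain ⟨k, hk, he⟩ := hu
          obtain ⟨k', hk', he'⟩ := hv
          exact absurd (he.trans he'.symm) (by simp)
        · obtain ⟨k, hk, he⟩ := hu
          obtain ⟨k', hk', he'⟩ := hv
          exact absurd (he.trans he'.symm) (by simp)
        · obtain ⟨k, hk, he⟩ := hu
          obtain ⟨k', hk', he'⟩ := hv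
          have h := he.trans he'.symm
          simp only [Sum.inr.injEq, Subtype.mk.injEq, Prod.mk.injEq] at h
          have h2 := castInj hmpos (block_lt i.isLt hk) (block_lt i'.isLt hk') h.2
          have hii : (i : ℕ) = (i' : ℕ) := by
            by_contra hne
            exact block_ne hk hk' hne h2
          have hb2 := b.isLt
          have hb2' := b'.isLt
          have hbb : (b : ℕ) = (b' : ℕ) := by omega
          exact congrArg Sum.inr (Prod.ext_iff.mpr ⟨Fin.ext hii, Fin.ext hbb⟩)
    intro u v huv
    rw [Set.disjoint_left]
    intro x hx hx'
    exact huv (dec u v x hx hx')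
  · -- edges
    have hgrid : ∀ (a a' : Fin s × Fin (s*r)),
        ((a.1 = a'.1 ∧ (a'.2 : ℕ) = (a.2 : ℕ) + 1) ∨
          (a.2 = a'.2 ∧ (a'.1 : ℕ) = (a.1 : ℕ) + 1)) →
        (cylGridRingBlowup (s+1) (r*s)).Adj
          (Sum.inl (⟨s - 1 - (a.1 : ℕ), by omega⟩, ((a.2 : ℕ) : ZMod (r*s))))
          (Sum.inl (⟨s - 1 - (a'.1 : ℕ), by omega⟩, ((a'.2 : ℕ) : ZMod (r*s)))) := by
      rintro a a' (⟨h1, h2⟩ | ⟨h1, h2⟩)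
      · apply ringBlowup_adj_inl
        simp only [h1, h2]
        refine cylGrid_adj_horiz hmpos _ ?_
        rw [← h2, ← hsr]
        exact a'.2.isLt
      · apply ringBlowup_adj_inl
        rw [h1]
        refine (cylGrid_adj_vert ?_ _).symm
        show s - 1 - (a.1 : ℕ) = s - 1 - (a'.1 : ℕ) + 1
        have := a'.1.isLt
        omega
    have hterm : ∀ (i' : Fin r) (b' : Fin 2) (a : Fin s × Fin (s*r)),
        (a.1 : ℕ) = 0 → (i' : ℕ) * s ≤ (a.2 : ℕ) → (a.2 : ℕ) < (i' : ℕ) * s + s →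
        ∃ y ∈ Xbr s r (Sum.inr (i', b')),
          (cylGridRingBlowup (s+1) (r*s)).Adj
            (Sum.inl (⟨s - 1 - (a.1 : ℕ), by omega⟩, ((a.2 : ℕ) : ZMod (r*s)))) y := by
      intro i' b' a h0 hlo hhi
      obtain ⟨k, hk2⟩ := Nat.le.dest hlo
      rw [← hk2] at hhi
      have hk : k < s := Nat.lt_of_add_lt_add_left hhi
      by_cases hb : (b' : ℕ) = 0
      · refine ⟨Sum.inl ((⟨s, by omega⟩ : Fin (s+1)), (((i' : ℕ) * s + k : ℕ) : ZMod (r*s))),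
          ?_, ?_⟩
        · simp only [Xbr]
          rw [if_pos hb]
          exact ⟨k, hk, rfl⟩
        · rw [hk2]
          exact ringBlowup_adj_inl (cylGrid_adj_vert
            (show s = s - 1 - (a.1 : ℕ) + 1 by omega) _)
      · refine ⟨Sum.inr ⟨((⟨s, by omega⟩ : Fin (s+1)),
          (((i' : ℕ) * s + k : ℕ) : ZMod (r*s))), rfl⟩, ?_, ?_⟩
        · simp only [Xbr]
          rw [if_neg hb]
          exact ⟨k, hk, rfl⟩
        · rw [hk2]
          exact ringBlowup_adj_inlr (cylGrid_adj_vert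
            (show s = s - 1 - (a.1 : ℕ) + 1 by omega) _)
    intro u v huv
    rw [Qgraph, SimpleGraph.fromRel_adj] at huv
    obtain ⟨hne, hrel⟩ := huv
    rcases u with a | ⟨i, b⟩ <;> rcases v with a' | ⟨i', b'⟩
    · rcases hrel with h | h
      · exact ⟨_, rfl, _, rfl, hgrid a a' h⟩
      · exact ⟨_, rfl, _, rfl, (hgrid a' a h).symm⟩
    · rcases hrel with h | h
      · exact h.elim
      · obtain ⟨h0, hlo, hhi⟩ := h
        obtain ⟨y, hy, hadj⟩ := hterm i' b' a h0 hlo hhi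
        exact ⟨_, rfl, y, hy, hadj⟩
    · rcases hrel with h | h
      · obtain ⟨h0, hlo, hhi⟩ := h
        obtain ⟨y, hy, hadj⟩ := hterm i b a' h0 hlo hhi
        exact ⟨y, hy, _, rfl, hadj.symm⟩
      · exact h.elim
    · rcases hrel with h | h <;> exact h.elim
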